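/- Generalized grey Brownian motion B_{α,β} = √(L_β)·B_{α/2}, with 0 < α < 2, 0 < β < 1, where L_β has density M_β bounded with M_β(0) = 1/Γ(1-β), and where the sup norm of fBm B_{α/2} satisfies exponential small-ball bounds, obeys P[sup_{0≤t≤1}|B_{α,β}(t)| ≤ ε] ~ ε²·E[(sup_{0≤t≤1}|B_{α/2}(t)|)^{-2}] / Γ(1-β) as ε ↓ 0. -/

import Mathlib

set_option maxHeartbeats 1000000

open MeasureTheory ProbabilityTheory Real Filter
open scoped ENNReal NNReal

lemma ggBm_coeff_bound (β : ℝ) (hβ0 : 0 < β) (hβ1 : β < 1) (n : ℕ) :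
    |1 / ((n.factorial : ℝ) * Real.Gamma (1 - β - β * n))| ≤ Real.Gamma β + 1 := by
  have hΓβ : 0 < Real.Gamma β := Real.Gamma_pos_of_pos hβ0
  have hfac : (1:ℝ) ≤ (n.factorial : ℝ) := by exact_mod_cast Nat.one_le_iff_ne_zero.mpr n.factorial_ne_zero
  have hfacpos : (0:ℝ) < (n.factorial : ℝ) := lt_of_lt_of_le one_pos hfac
  have hs : (0:ℝ) < β * (n + 1) := by positivity
  have hrw : 1 - β - β * n = 1 - β * (n+1) := by push_cast; ring
  by_cases hint : ∃ m : ℤ, (β * ((n:ℝ)+1)) = m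
  · obtain ⟨m, hm⟩ := hint
    have hm1 : 1 ≤ m := by
      have h0 : (0:ℝ) < (m:ℝ) := by rw [← hm]; exact hs
      have : (0:ℤ) < m := by exact_mod_cast h0
      omega
    have hz : Real.Gamma (1 - β * ((n:ℝ)+1)) = 0 := by
      rw [Real.Gamma_eq_zero_iff]
      refine ⟨(m - 1).toNat, ?_⟩
      have : (((m-1).toNat : ℤ) : ℝ) = ((m:ℝ) - 1) := by
        rw [Int.toNat_of_nonneg (by omega)]; push_cast; ring
      rw [hm]
      push_cast at this ⊢
      linarith [this]
    rw [hrw, hz, mul_zero, div_zero, abs_zero]; positivity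
  · have hsin : Real.sin (Real.pi * (β * ((n:ℝ)+1))) ≠ 0 := by
      intro h
      rcases Real.sin_eq_zero_iff.mp h with ⟨k, hk⟩
      refine hint ⟨k, ?_⟩
      have hπ : (Real.pi) ≠ 0 := Real.pi_ne_zero
      have : Real.pi * (k:ℝ) = Real.pi * (β * ((n:ℝ)+1)) := by linarith [hk]
      exact (mul_left_cancel₀ hπ this).symm
    have hΓs : 0 < Real.Gamma (β * ((n:ℝ)+1)) := Real.Gamma_pos_of_pos hs
    have hrefl := Real.Gamma_mul_Gamma_one_sub (β * ((n:ℝ)+1))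
    have hΓ1s : Real.Gamma (1 - β * ((n:ℝ)+1)) =
        Real.pi / (Real.sin (Real.pi * (β * ((n:ℝ)+1))) * Real.Gamma (β * ((n:ℝ)+1))) := by
      field_simp at hrefl ⊢
      linarith [hrefl]
    have hπpos := Real.pi_pos
    have habs : |1 / ((n.factorial : ℝ) * Real.Gamma (1 - β - β * n))|
        = |Real.sin (Real.pi * (β * ((n:ℝ)+1)))| * Real.Gamma (β * ((n:ℝ)+1)) / (Real.pi * (n.factorial : ℝ)) := by
      rw [hrw, hΓ1s]
      rw [abs_div, abs_mul, abs_div, abs_mul]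
      rw [abs_of_pos hπpos, abs_of_pos hfacpos, abs_of_pos hΓs, abs_one]
      field_simp
    rw [habs]
    have hsin1 : |Real.sin (Real.pi * (β * ((n:ℝ)+1)))| ≤ 1 :=
      abs_le.mpr ⟨Real.neg_one_le_sin _, Real.sin_le_one _⟩
    have hmax : Real.Gamma (β * ((n:ℝ)+1)) ≤ max (Real.Gamma β) ((n.factorial : ℝ)) := by
      have hconv := Real.convexOn_Gamma
      have hmem : β * ((n:ℝ)+1) ∈ Set.Icc β ((n:ℝ)+1) := by
        constructor
        · nlinarith [Nat.cast_nonneg (α := ℝ) n]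
        · nlinarith [Nat.cast_nonneg (α := ℝ) n]
      have := hconv.le_max_of_mem_Icc (Set.mem_Ioi.mpr hβ0)
        (Set.mem_Ioi.mpr (by positivity)) hmem
      rwa [Real.Gamma_nat_eq_factorial] at this
    have hmax2 : max (Real.Gamma β) ((n.factorial : ℝ)) ≤ (Real.Gamma β + 1) * (n.factorial : ℝ) := by
      apply max_le
      · nlinarith
      · nlinarith
    have hπ1 : (1:ℝ) ≤ Real.pi := by linarith [Real.pi_gt_three]
    calc |Real.sin (Real.pi * (β * ((n:ℝ)+1)))| * Real.Gamma (β * ((n:ℝ)+1)) / (Real.pi * (n.factorial : ℝ))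
        ≤ 1 * ((Real.Gamma β + 1) * (n.factorial : ℝ)) / (1 * (n.factorial : ℝ)) := by
          apply div_le_div₀ (by positivity) (by nlinarith) (by positivity)
          · apply mul_le_mul hπ1 le_rfl (by positivity) (by positivity)
      _ = Real.Gamma β + 1 := by field_simp


lemma ggBm_Mwright_near_zero (β : ℝ) (hβ0 : 0 < β) (hβ1 : β < 1) (Mβ : ℝ → ℝ)
    (hMβ : ∀ x : ℝ, 0 ≤ x →
      Mβ x = ∑' n : ℕ, (-x) ^ n / ((n.factorial : ℝ) * Real.Gamma (1 - β - β * n)))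
    {x : ℝ} (hx0 : 0 < x) (hx : x ≤ 1/2) :
    |Mβ x - (Real.Gamma (1 - β))⁻¹| ≤ 2 * (Real.Gamma β + 1) * x := by
  set K := Real.Gamma β + 1 with hK
  have hKpos : 0 < K := by have := Real.Gamma_pos_of_pos hβ0; positivity
  set a : ℕ → ℝ := fun n => (-x) ^ n / ((n.factorial : ℝ) * Real.Gamma (1 - β - β * n)) with ha
  have habs : ∀ n, ‖a n‖ ≤ K * x ^ n := by
    intro n
    have h1 : ‖a n‖ = x ^ n * |1 / ((n.factorial : ℝ) * Real.Gamma (1 - β - β * n))| := by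
      rw [Real.norm_eq_abs, ha]
      simp only []
      rw [abs_div, abs_pow, abs_neg, abs_of_pos hx0, abs_one_div, mul_one_div]
    rw [h1, mul_comm]
    exact mul_le_mul (ggBm_coeff_bound β hβ0 hβ1 n) le_rfl (by positivity) (by positivity)
  have hx1 : x < 1 := by linarith
  have hgeo : Summable (fun n : ℕ => K * x ^ n) :=
    (summable_geometric_of_lt_one hx0.le hx1).mul_left K
  have hsum : Summable a := Summable.of_norm_bounded hgeo habs
  have ha0 : a 0 = (Real.Gamma (1 - β))⁻¹ := by
    simp [ha, Nat.factorial]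
  have htail : Summable (fun n : ℕ => a (n + 1)) := (summable_nat_add_iff 1).mpr hsum
  have hMx : Mβ x - (Real.Gamma (1 - β))⁻¹ = ∑' n : ℕ, a (n + 1) := by
    rw [hMβ x hx0.le, ← ha, Summable.tsum_eq_zero_add hsum, ha0]; ring
  rw [hMx, ← Real.norm_eq_abs]
  have hnorm : Summable (fun n : ℕ => ‖a (n+1)‖) := htail.norm
  have h1 : ‖∑' n : ℕ, a (n + 1)‖ ≤ ∑' n : ℕ, K * x ^ (n + 1) :=
    (norm_tsum_le_tsum_norm hnorm).trans
      (Summable.tsum_le_tsum (fun n => habs (n+1)) hnorm ((summable_nat_add_iff 1).mpr hgeo))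
  have h2 : ∑' n : ℕ, K * x ^ (n + 1) = K * x * (1 - x)⁻¹ := by
    have : ∀ n : ℕ, K * x ^ (n + 1) = (K * x) * x ^ n := by
      intro n; rw [pow_succ]; ring
    simp_rw [this]
    rw [tsum_mul_left, tsum_geometric_of_lt_one hx0.le hx1]
  have h3 : (1 - x)⁻¹ ≤ 2 := by
    rw [inv_le_comm₀ (by linarith) (by norm_num)]
    linarith
  calc ‖∑' n : ℕ, a (n + 1)‖ ≤ K * x * (1 - x)⁻¹ := by rw [← h2]; exact h1
    _ ≤ K * x * 2 := mul_le_mul_of_nonneg_left h3 (by positivity)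
    _ = 2 * K * x := by ring


lemma ggBm_exp_small (C₂ γ : ℝ) (hC : 0 < C₂) (hγ : 0 < γ) :
    ∃ D : ℝ, 0 < D ∧ ∀ ε : ℝ, 0 < ε → ε ≤ 1 →
      Real.exp (-C₂ * ε ^ (-γ)) ≤ D * ε ^ (3:ℝ) := by
  obtain ⟨m, hm⟩ : ∃ m : ℕ, 3 / γ ≤ m := exists_nat_ge (3/γ)
  have hm3 : 3 ≤ γ * m := by
    rw [← div_le_iff₀' hγ] at *; linarith [hm]
  refine ⟨(m.factorial : ℝ) / C₂ ^ m, by positivity, fun ε hε hε1 => ?_⟩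
  have hy : 0 < ε ^ (-γ) := Real.rpow_pos_of_pos hε _
  have key : (C₂ * ε ^ (-γ)) ^ m / (m.factorial : ℝ) ≤ Real.exp (C₂ * ε ^ (-γ)) :=
    Real.pow_div_factorial_le_exp (x := C₂ * ε ^ (-γ)) (by positivity) m
  have hpow : (0:ℝ) < (C₂ * ε ^ (-γ)) ^ m / (m.factorial : ℝ) := by positivity
  have h1 : Real.exp (-C₂ * ε ^ (-γ)) ≤ ((C₂ * ε ^ (-γ)) ^ m / (m.factorial : ℝ))⁻¹ := by
    rw [show -C₂ * ε ^ (-γ) = -(C₂ * ε ^ (-γ)) by ring, Real.exp_neg]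
    exact inv_anti₀ hpow key
  refine h1.trans ?_
  have h2 : ((C₂ * ε ^ (-γ)) ^ m / (m.factorial : ℝ))⁻¹
      = (m.factorial : ℝ) / C₂ ^ m * (ε ^ γ) ^ m := by
    rw [mul_pow, inv_div]
    rw [← Real.rpow_natCast (ε ^ (-γ)) m, ← Real.rpow_mul hε.le]
    rw [← Real.rpow_natCast (ε ^ γ) m, ← Real.rpow_mul hε.le]
    rw [show -γ * m = -(γ * m) by ring, Real.rpow_neg hε.le]
    field_simp
  rw [h2]
  have h3 : (ε ^ γ) ^ m ≤ ε ^ (3:ℝ) := by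
    rw [← Real.rpow_natCast (ε ^ γ) m, ← Real.rpow_mul hε.le]
    exact Real.rpow_le_rpow_of_exponent_ge hε hε1 hm3
  exact mul_le_mul_of_nonneg_left h3 (by positivity)


theorem ggBm_small_ball {Ω : Type*} [MeasurableSpace Ω]
    (μ : Measure Ω) [IsProbabilityMeasure μ]
    (α β : ℝ) (hα0 : 0 < α) (hα2 : α < 2) (hβ0 : 0 < β) (hβ1 : β < 1)
    -- fractional Brownian motion with Hurst parameter H = α/2, and its sup norm S
    (B : Ω → ℝ → ℝ) (S : Ω → ℝ)
    (hS : ∀ ω, S ω = sSup ((fun t => |B ω t|) '' Set.Icc 0 1))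
    (hSm : Measurable S) (hS0 : ∀ ω, 0 ≤ S ω)
    -- exponential small-ball bounds for the sup norm of fBm
    (C₁ C₂ : ℝ) (hC₁ : 0 < C₁) (hC₂ : 0 < C₂)
    (hsb : ∀ ε : ℝ, 0 < ε → ε ≤ 1 →
      -C₁ * ε ^ (-(1 / (α / 2))) ≤ Real.log (μ {ω | S ω ≤ ε}).toReal ∧
      Real.log (μ {ω | S ω ≤ ε}).toReal ≤ -C₂ * ε ^ (-(1 / (α / 2))))
    -- the independent factor L_β with the M-Wright density M_β
    (L : Ω → ℝ) (hLm : Measurable L) (hL0 : ∀ᵐ ω ∂μ, 0 < L ω)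
    (hindep : IndepFun S L μ)
    (Mβ : ℝ → ℝ)
    (hMβ : ∀ x : ℝ, 0 ≤ x →
      Mβ x = ∑' n : ℕ, (-x) ^ n / ((n.factorial : ℝ) * Real.Gamma (1 - β - β * n)))
    (hM0 : ∀ x < (0 : ℝ), Mβ x = 0) (hMnn : ∀ x, 0 ≤ Mβ x)
    (hMbd : ∃ C, ∀ x, Mβ x ≤ C)
    (hMd : μ.map L = volume.withDensity (fun x => ENNReal.ofReal (Mβ x))) :
    Tendsto
      (fun ε : ℝ => (μ {ω | Real.sqrt (L ω) * S ω ≤ ε}).toReal / ε ^ 2)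
      (nhdsWithin 0 (Set.Ioi 0))
      (nhds ((∫ ω, (S ω) ^ (-2 : ℝ) ∂μ) / Real.Gamma (1 - β))) := by
  have hΓpos : 0 < Real.Gamma (1 - β) := Real.Gamma_pos_of_pos (by linarith)
  have hΓβ : 0 < Real.Gamma β := Real.Gamma_pos_of_pos hβ0
  set c : ℝ := (Real.Gamma (1 - β))⁻¹ with hc
  have hcpos : 0 < c := by positivity
  set K : ℝ := Real.Gamma β + 1 with hK
  have hKpos : 0 < K := by positivity
  obtain ⟨C, hC⟩ := hMbd
  have hC0 : 0 ≤ C := le_trans (hMnn 0) (hC 0)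
  set ρ : Measure ℝ := μ.map S with hρ
  haveI : IsProbabilityMeasure ρ := Measure.isProbabilityMeasure_map hSm.aemeasurable
  haveI : IsProbabilityMeasure (μ.map L) := Measure.isProbabilityMeasure_map hLm.aemeasurable
  have hγ : (0:ℝ) < 1 / (α / 2) := by positivity
  -- polynomial small-ball bound
  obtain ⟨D, hD0, hD⟩ := ggBm_exp_small C₂ (1/(α/2)) hC₂ hγ
  have hq : ∀ ε : ℝ, 0 < ε → ε ≤ 1 →
      μ {ω | S ω ≤ ε} ≤ ENNReal.ofReal (D * ε ^ (3:ℝ)) := by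
    intro ε hε hε1
    have h2 := (hsb ε hε hε1).2
    have hfin : μ {ω | S ω ≤ ε} ≠ ⊤ := measure_ne_top μ _
    rcases eq_or_ne (μ {ω | S ω ≤ ε}) 0 with h0 | h0
    · simp [h0]
    · have hpos : 0 < (μ {ω | S ω ≤ ε}).toReal := ENNReal.toReal_pos h0 hfin
      have hle : (μ {ω | S ω ≤ ε}).toReal ≤ Real.exp (-C₂ * ε ^ (-(1/(α/2)))) := by
        calc (μ {ω | S ω ≤ ε}).toReal = Real.exp (Real.log (μ {ω | S ω ≤ ε}).toReal) :=
              (Real.exp_log hpos).symm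
          _ ≤ Real.exp (-C₂ * ε ^ (-(1/(α/2)))) := Real.exp_le_exp.mpr h2
      rw [← ENNReal.ofReal_toReal hfin]
      exact ENNReal.ofReal_le_ofReal (hle.trans (hD ε hε hε1))
  -- S is a.e. positive
  have hS0null : μ {ω | S ω ≤ 0} = 0 := by
    have hb : ∀ n : ℕ, (μ {ω | S ω ≤ 0}).toReal ≤ D * ((1:ℝ)/(n+1)) ^ (3:ℝ) := by
      intro n
      have h1 : μ {ω | S ω ≤ 0} ≤ ENNReal.ofReal (D * ((1:ℝ)/(n+1)) ^ (3:ℝ)) := by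
        have hss : {ω | S ω ≤ 0} ⊆ {ω | S ω ≤ (1:ℝ)/(n+1)} := fun ω (h : S ω ≤ 0) =>
          le_trans h (by positivity)
        refine le_trans (measure_mono hss) ?_
        exact hq ((1:ℝ)/(n+1)) (by positivity)
          (by rw [div_le_one (by positivity)]; linarith [Nat.cast_nonneg (α := ℝ) n])
      exact ENNReal.toReal_le_of_le_ofReal (by positivity) h1
    have hlim : Tendsto (fun n : ℕ => D * ((1:ℝ)/(n+1)) ^ (3:ℝ)) atTop (nhds 0) := by
      have h1 : Tendsto (fun n : ℕ => (1:ℝ)/(n+1)) atTop (nhds 0) :=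
        tendsto_one_div_add_atTop_nhds_zero_nat
      have h2 := h1.rpow_const (p := 3) (Or.inr (by norm_num))
      rw [show ((0:ℝ) ^ (3:ℝ)) = 0 by rw [Real.zero_rpow]; norm_num] at h2
      simpa using h2.const_mul D
    have h4 : (μ {ω | S ω ≤ 0}).toReal ≤ 0 := ge_of_tendsto hlim (Eventually.of_forall hb)
    have h5 : (μ {ω | S ω ≤ 0}).toReal = 0 := le_antisymm h4 ENNReal.toReal_nonneg
    exact ((ENNReal.toReal_eq_zero_iff _).mp h5).resolve_right (measure_ne_top μ _)
  have hρpos : ∀ᵐ s ∂ρ, 0 < s := by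
    rw [ae_iff]
    have hset : {s : ℝ | ¬ 0 < s} = Set.Iic 0 := by ext s; simp [not_lt]
    rw [hset, hρ, Measure.map_apply hSm measurableSet_Iic]
    exact hS0null
  -- integrability of s ^ (-2)
  have hrp : ∀ s : ℝ, s ^ (-2:ℝ) = (s^2)⁻¹ := by
    intro s
    rw [show ((-2:ℝ)) = ((-2:ℤ):ℝ) by norm_num, Real.rpow_intCast, zpow_neg, zpow_two, sq]
  have hm2 : Measurable (fun s : ℝ => s ^ (-2:ℝ)) := by
    simp_rw [hrp]; exact (measurable_id.pow_const 2).inv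
  have hInt : Integrable (fun s : ℝ => s ^ (-2:ℝ)) ρ := by
    have hnn : 0 ≤ᵐ[ρ] (fun s : ℝ => s ^ (-2:ℝ)) := by
      filter_upwards [hρpos] with s hs
      positivity
    refine ⟨hm2.aestronglyMeasurable, ?_⟩
    rw [hasFiniteIntegral_iff_ofReal hnn,
      lintegral_eq_lintegral_meas_le ρ hnn hm2.aemeasurable]
    have hsplit : Set.Ioi (0:ℝ) = Set.Ioc 0 1 ∪ Set.Ioi 1 :=
      (Set.Ioc_union_Ioi_eq_Ioi (by norm_num)).symm
    rw [hsplit, lintegral_union measurableSet_Ioi (Set.Ioc_disjoint_Ioi le_rfl)]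
    have hρIic : ∀ x : ℝ, ρ (Set.Iic x) = μ {ω | S ω ≤ x} := by
      intro x; rw [hρ, Measure.map_apply hSm measurableSet_Iic]; rfl
    have hpart1 : ∫⁻ t in Set.Ioc (0:ℝ) 1, ρ {a | t ≤ a ^ (-2:ℝ)} ∂volume ≤ 1 := by
      calc ∫⁻ t in Set.Ioc (0:ℝ) 1, ρ {a | t ≤ a ^ (-2:ℝ)} ∂volume
          ≤ ∫⁻ _ in Set.Ioc (0:ℝ) 1, 1 ∂volume := lintegral_mono fun t => prob_le_one
        _ = 1 := by rw [setLIntegral_const, Real.volume_Ioc]; norm_num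
    have hpart2 : ∫⁻ t in Set.Ioi (1:ℝ), ρ {a | t ≤ a ^ (-2:ℝ)} ∂volume ≠ ⊤ := by
      have hb : ∀ t : ℝ, t ∈ Set.Ioi (1:ℝ) →
          ρ {a | t ≤ a ^ (-2:ℝ)} ≤ ENNReal.ofReal D * ENNReal.ofReal (t ^ (-3/2 : ℝ)) := by
        intro t ht
        have ht1 : (1:ℝ) < t := ht
        have ht0 : (0:ℝ) < t := by linarith
        have hsub : {a : ℝ | t ≤ a ^ (-2:ℝ)} ⊆ Set.Iic (t ^ (-1/2:ℝ)) ∪ Set.Iic 0 := by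
          intro a ha
          rcases le_or_gt a 0 with h | h
          · exact Or.inr h
          · left
            have h2 : (a ^ (-2:ℝ)) ^ (-1/2:ℝ) ≤ t ^ (-1/2:ℝ) :=
              Real.rpow_le_rpow_of_nonpos ht0 ha (by norm_num)
            have h3 : (a ^ (-2:ℝ)) ^ (-1/2:ℝ) = a := by
              rw [← Real.rpow_mul h.le]; norm_num
            rwa [h3] at h2
        have htpow0 : 0 < t ^ (-1/2:ℝ) := Real.rpow_pos_of_pos ht0 _
        have htpow1 : t ^ (-1/2:ℝ) ≤ 1 :=
          Real.rpow_le_one_of_one_le_of_nonpos ht1.le (by norm_num)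
        calc ρ {a | t ≤ a ^ (-2:ℝ)} ≤ ρ (Set.Iic (t ^ (-1/2:ℝ)) ∪ Set.Iic 0) := measure_mono hsub
          _ ≤ ρ (Set.Iic (t ^ (-1/2:ℝ))) + ρ (Set.Iic 0) := measure_union_le _ _
          _ = ρ (Set.Iic (t ^ (-1/2:ℝ))) := by rw [hρIic 0, hS0null, add_zero]
          _ ≤ ENNReal.ofReal (D * (t ^ (-1/2:ℝ)) ^ (3:ℝ)) := by
              rw [hρIic]; exact hq _ htpow0 htpow1
          _ = ENNReal.ofReal D * ENNReal.ofReal (t ^ (-3/2:ℝ)) := by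
              rw [← Real.rpow_mul ht0.le, ENNReal.ofReal_mul hD0.le]
              norm_num
      have hmono : ∫⁻ t in Set.Ioi (1:ℝ), ρ {a | t ≤ a ^ (-2:ℝ)} ∂volume
          ≤ ∫⁻ t in Set.Ioi (1:ℝ), ENNReal.ofReal D * ENNReal.ofReal (t ^ (-3/2:ℝ)) ∂volume := by
        refine lintegral_mono_ae ?_
        filter_upwards [ae_restrict_mem measurableSet_Ioi] with t ht
        exact hb t ht
      refine (lt_of_le_of_lt hmono ?_).ne
      rw [lintegral_const_mul' _ _ ENNReal.ofReal_ne_top]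
      have hint : IntegrableOn (fun t : ℝ => t ^ (-3/2:ℝ)) (Set.Ioi 1) :=
        integrableOn_Ioi_rpow_of_lt (by norm_num) one_pos
      have hfin := hint.2
      rw [hasFiniteIntegral_iff_ofReal ?hpos] at hfin
      case hpos =>
        filter_upwards [ae_restrict_mem measurableSet_Ioi] with t ht
        have : (1:ℝ) < t := ht
        positivity
      exact ENNReal.mul_lt_top ENNReal.ofReal_lt_top hfin
    exact ENNReal.add_lt_top.mpr
      ⟨lt_of_le_of_lt hpart1 ENNReal.one_lt_top, lt_top_iff_ne_top.mpr hpart2⟩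
  -- the distribution function G of L
  set G : ℝ → ℝ≥0∞ := fun y => ∫⁻ x in Set.Iic y, ENNReal.ofReal (Mβ x) with hG
  have hGmono : Monotone G := fun a b hab =>
    lintegral_mono' (Measure.restrict_mono (Set.Iic_subset_Iic.mpr hab) le_rfl) le_rfl
  have hGmeas : Measurable G := hGmono.measurable
  have hGle1 : ∀ y, G y ≤ 1 := by
    intro y
    calc G y ≤ ∫⁻ x, ENNReal.ofReal (Mβ x) := lintegral_mono' Measure.restrict_le_self le_rfl
      _ = (volume.withDensity (fun x => ENNReal.ofReal (Mβ x))) Set.univ := by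
          rw [withDensity_apply _ MeasurableSet.univ, Measure.restrict_univ]
      _ = (μ.map L) Set.univ := by rw [hMd]
      _ = 1 := measure_univ
  have hGfin : ∀ y, G y ≠ ⊤ := fun y => (lt_of_le_of_lt (hGle1 y) ENNReal.one_lt_top).ne
  have hIic0 : ∫⁻ x in Set.Iic (0:ℝ), ENNReal.ofReal (Mβ x) = 0 := by
    have hae : (fun x => ENNReal.ofReal (Mβ x)) =ᵐ[volume.restrict (Set.Iic (0:ℝ))] 0 := by
      have h1 : ∀ᵐ x ∂(volume.restrict (Set.Iic (0:ℝ))), x ≠ 0 := by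
        rw [ae_iff]
        refine measure_mono_null (t := {(0:ℝ)}) (fun x hx => ?_) ?_
        · simp only [Set.mem_setOf_eq, not_not] at hx
          simp [hx]
        · rw [Measure.restrict_apply' measurableSet_Iic]
          exact measure_mono_null Set.inter_subset_left Real.volume_singleton
      have h2 : ∀ᵐ x ∂(volume.restrict (Set.Iic (0:ℝ))), x ∈ Set.Iic (0:ℝ) :=
        ae_restrict_mem measurableSet_Iic
      filter_upwards [h1, h2] with x hx1 hx2
      have hxlt : x < 0 := lt_of_le_of_ne hx2 hx1
      simp [hM0 x hxlt]
    rw [lintegral_congr_ae hae]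
    simp
  have hGsplit : ∀ y : ℝ, 0 ≤ y → G y = ∫⁻ x in Set.Ioc 0 y, ENNReal.ofReal (Mβ x) := by
    intro y hy
    rw [hG]
    simp only []
    rw [← Set.Iic_union_Ioc_eq_Iic hy,
      lintegral_union measurableSet_Ioc (by
        rw [Set.disjoint_left]; intro x hx1 hx2; exact absurd hx2.1 (not_lt.mpr hx1)),
      hIic0, zero_add]
  have hGub : ∀ y : ℝ, 0 ≤ y → G y ≤ ENNReal.ofReal (C * y) := by
    intro y hy
    rw [hGsplit y hy]
    calc ∫⁻ x in Set.Ioc 0 y, ENNReal.ofReal (Mβ x)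
        ≤ ∫⁻ _ in Set.Ioc 0 y, ENNReal.ofReal C :=
          lintegral_mono fun x => ENNReal.ofReal_le_ofReal (hC x)
      _ = ENNReal.ofReal C * ENNReal.ofReal y := by
          rw [setLIntegral_const, Real.volume_Ioc, sub_zero]
      _ = ENNReal.ofReal (C * y) := (ENNReal.ofReal_mul hC0).symm
  -- limit of G y / y as y → 0+
  have hGlim : Tendsto (fun y => (G y).toReal / y) (nhdsWithin 0 (Set.Ioi 0)) (nhds c) := by
    have hbound : ∀ y : ℝ, 0 < y → y ≤ 1/2 →
        c - 2*K*y ≤ (G y).toReal / y ∧ (G y).toReal / y ≤ c + 2*K*y := by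
      intro y hy0 hy
      have hydiff : ∀ x : ℝ, x ∈ Set.Ioc 0 y → c - 2*K*y ≤ Mβ x ∧ Mβ x ≤ c + 2*K*y := by
        intro x hx
        have h1 := ggBm_Mwright_near_zero β hβ0 hβ1 Mβ hMβ hx.1 (le_trans hx.2 hy)
        rw [← hK, ← hc, abs_le] at h1
        have h2 : 2*K*x ≤ 2*K*y := by nlinarith [hx.2]
        constructor <;> nlinarith [h1.1, h1.2]
      have hup : G y ≤ ENNReal.ofReal ((c + 2*K*y) * y) := by
        rw [hGsplit y hy0.le]
        calc ∫⁻ x in Set.Ioc 0 y, ENNReal.ofReal (Mβ x)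
            ≤ ∫⁻ _ in Set.Ioc 0 y, ENNReal.ofReal (c + 2*K*y) := by
              refine lintegral_mono_ae ?_
              filter_upwards [ae_restrict_mem measurableSet_Ioc] with x hx
              exact ENNReal.ofReal_le_ofReal (hydiff x hx).2
          _ = ENNReal.ofReal (c + 2*K*y) * ENNReal.ofReal y := by
              rw [setLIntegral_const, Real.volume_Ioc, sub_zero]
          _ = ENNReal.ofReal ((c + 2*K*y) * y) := (ENNReal.ofReal_mul (by positivity)).symm
      have hlo : ENNReal.ofReal ((c - 2*K*y) * y) ≤ G y := by
        rw [hGsplit y hy0.le]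
        calc ENNReal.ofReal ((c - 2*K*y) * y)
            ≤ ENNReal.ofReal (c - 2*K*y) * ENNReal.ofReal y := by
              rcases le_or_gt (c - 2*K*y) 0 with h | h
              · rw [ENNReal.ofReal_of_nonpos (by nlinarith)]
                exact zero_le
              · rw [ENNReal.ofReal_mul h.le]
          _ = ∫⁻ _ in Set.Ioc 0 y, ENNReal.ofReal (c - 2*K*y) := by
              rw [setLIntegral_const, Real.volume_Ioc, sub_zero]
          _ ≤ ∫⁻ x in Set.Ioc 0 y, ENNReal.ofReal (Mβ x) := by
              refine lintegral_mono_ae ?_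
              filter_upwards [ae_restrict_mem measurableSet_Ioc] with x hx
              exact ENNReal.ofReal_le_ofReal (hydiff x hx).1
      constructor
      · have h1 : (c - 2*K*y) * y ≤ (G y).toReal :=
          (ENNReal.ofReal_le_iff_le_toReal (hGfin y)).mp hlo
        rw [le_div_iff₀ hy0]
        exact h1
      · have h2 : (G y).toReal ≤ (c + 2*K*y) * y :=
          ENNReal.toReal_le_of_le_ofReal (by positivity) hup
        rw [div_le_iff₀ hy0]
        exact h2
    refine tendsto_of_tendsto_of_tendsto_of_le_of_le'
      (g := fun y => c - 2*K*y) (h := fun y => c + 2*K*y) ?_ ?_ ?_ ?_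
    · have h1 : Tendsto (fun y : ℝ => c - 2*K*y) (nhds 0) (nhds (c - 2*K*0)) :=
        (continuous_const.sub (continuous_const.mul continuous_id)).tendsto 0
      have h2 := h1.mono_left (nhdsWithin_le_nhds (s := Set.Ioi (0:ℝ)))
      simpa using h2
    · have h1 : Tendsto (fun y : ℝ => c + 2*K*y) (nhds 0) (nhds (c + 2*K*0)) :=
        (continuous_const.add (continuous_const.mul continuous_id)).tendsto 0
      have h2 := h1.mono_left (nhdsWithin_le_nhds (s := Set.Ioi (0:ℝ)))
      simpa using h2
    · filter_upwards [Ioc_mem_nhdsGT_of_mem (Set.mem_Ico.mpr ⟨le_rfl, (by norm_num : (0:ℝ) < 1/2)⟩)] with y hy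
      exact (hbound y hy.1 hy.2).1
    · filter_upwards [Ioc_mem_nhdsGT_of_mem (Set.mem_Ico.mpr ⟨le_rfl, (by norm_num : (0:ℝ) < 1/2)⟩)] with y hy
      exact (hbound y hy.1 hy.2).2
  -- identification of the small-ball probability
  have hPε : ∀ ε : ℝ, 0 < ε →
      (μ {ω | Real.sqrt (L ω) * S ω ≤ ε}).toReal = ∫ s, (G (ε^2/s^2)).toReal ∂ρ := by
    intro ε hε
    have hmap := (indepFun_iff_map_prod_eq_prod_map_map hSm.aemeasurable hLm.aemeasurable).mp hindep
    have hAm : MeasurableSet {p : ℝ × ℝ | Real.sqrt p.2 * p.1 ≤ ε} :=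
      measurableSet_le ((Real.continuous_sqrt.measurable.comp measurable_snd).mul measurable_fst)
        measurable_const
    have h1 : μ {ω | Real.sqrt (L ω) * S ω ≤ ε}
        = ((μ.map S).prod (μ.map L)) {p : ℝ × ℝ | Real.sqrt p.2 * p.1 ≤ ε} := by
      rw [← hmap, Measure.map_apply (hSm.prodMk hLm) hAm]
      rfl
    have h2 : ((μ.map S).prod (μ.map L)) {p : ℝ × ℝ | Real.sqrt p.2 * p.1 ≤ ε}
        = ∫⁻ s, (μ.map L) (Prod.mk s ⁻¹' {p : ℝ × ℝ | Real.sqrt p.2 * p.1 ≤ ε}) ∂ρ :=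
      Measure.prod_apply hAm
    have h3 : ∫⁻ s, (μ.map L) (Prod.mk s ⁻¹' {p : ℝ × ℝ | Real.sqrt p.2 * p.1 ≤ ε}) ∂ρ
        = ∫⁻ s, G (ε^2/s^2) ∂ρ := by
      refine lintegral_congr_ae ?_
      filter_upwards [hρpos] with s hs
      have hset : Prod.mk s ⁻¹' {p : ℝ × ℝ | Real.sqrt p.2 * p.1 ≤ ε} = Set.Iic (ε^2/s^2) := by
        ext l
        simp only [Set.mem_preimage, Set.mem_setOf_eq, Set.mem_Iic]
        constructor
        · intro h
          rcases le_or_gt l 0 with hl | hl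
          · exact hl.trans (by positivity)
          · have h' : Real.sqrt l ≤ ε / s := (le_div_iff₀ hs).mpr h
            calc l = Real.sqrt l ^ 2 := (Real.sq_sqrt hl.le).symm
              _ ≤ (ε/s)^2 := by nlinarith [Real.sqrt_nonneg l]
              _ = ε^2/s^2 := div_pow ε s 2
        · intro h
          have h2' : Real.sqrt l ≤ ε / s := by
            calc Real.sqrt l ≤ Real.sqrt (ε^2/s^2) := Real.sqrt_le_sqrt h
              _ = ε / s := by rw [← div_pow, Real.sqrt_sq (by positivity)]
          calc Real.sqrt l * s ≤ (ε/s) * s := mul_le_mul_of_nonneg_right h2' hs.le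
            _ = ε := div_mul_cancel₀ ε hs.ne'
      rw [hset, hMd, withDensity_apply _ measurableSet_Iic]
    have h4 : AEMeasurable (fun s : ℝ => G (ε^2/s^2)) ρ :=
      (hGmeas.comp (measurable_const.div (measurable_id.pow_const 2))).aemeasurable
    have h5 : ∀ᵐ s ∂ρ, G (ε^2/s^2) < ⊤ :=
      Eventually.of_forall fun s => lt_of_le_of_lt (hGle1 _) ENNReal.one_lt_top
    rw [h1, h2, h3, ← integral_toReal h4 h5]
  -- dominated convergence
  have hmeasF : ∀ ε : ℝ, Measurable (fun s : ℝ => (G (ε^2/s^2)).toReal) := fun ε =>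
    (hGmeas.comp (measurable_const.div (measurable_id.pow_const 2))).ennreal_toReal
  have key : Tendsto (fun ε : ℝ => ∫ s, (G (ε^2/s^2)).toReal / ε^2 ∂ρ)
      (nhdsWithin 0 (Set.Ioi 0)) (nhds (∫ s, c * s ^ (-2:ℝ) ∂ρ)) := by
    refine tendsto_integral_filter_of_dominated_convergence (bound := fun s => C * s ^ (-2:ℝ))
      ?_ ?_ ?_ ?_
    · exact Eventually.of_forall fun ε => ((hmeasF ε).div_const _).aestronglyMeasurable
    · filter_upwards [self_mem_nhdsWithin] with ε (hε : ε ∈ Set.Ioi 0)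
      filter_upwards [hρpos] with s hs
      have hε0 : (0:ℝ) < ε := hε
      have hy0 : (0:ℝ) ≤ ε^2/s^2 := by positivity
      have h1 : (G (ε^2/s^2)).toReal ≤ C * (ε^2/s^2) :=
        ENNReal.toReal_le_of_le_ofReal (by positivity) (hGub _ hy0)
      have h2 : (G (ε^2/s^2)).toReal / ε^2 ≤ C * s ^ (-2:ℝ) := by
        rw [hrp s, div_le_iff₀ (by positivity : (0:ℝ) < ε^2)]
        refine h1.trans (le_of_eq ?_)
        field_simp
      rw [Real.norm_eq_abs, abs_of_nonneg (by positivity)]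
      exact h2
    · exact hInt.const_mul C
    · filter_upwards [hρpos] with s hs
      have hys : Tendsto (fun ε : ℝ => ε^2/s^2) (nhdsWithin 0 (Set.Ioi 0))
          (nhdsWithin 0 (Set.Ioi 0)) := by
        apply tendsto_nhdsWithin_of_tendsto_nhds_of_eventually_within
        · have h1 : Tendsto (fun ε : ℝ => ε^2/s^2) (nhds 0) (nhds (0^2/s^2)) :=
            ((continuous_pow 2).div_const _).tendsto 0
          have h2 := h1.mono_left (nhdsWithin_le_nhds (s := Set.Ioi (0:ℝ)))
          simpa using h2
        · filter_upwards [self_mem_nhdsWithin] with ε (hε : ε ∈ Set.Ioi 0)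
          have hε0 : (0:ℝ) < ε := hε
          exact Set.mem_Ioi.mpr (by positivity)
      have h1 := (hGlim.comp hys).mul_const ((s^2)⁻¹)
      have heq : ∀ᶠ ε in nhdsWithin (0:ℝ) (Set.Ioi 0),
          (G (ε^2/s^2)).toReal / (ε^2/s^2) * (s^2)⁻¹ = (G (ε^2/s^2)).toReal / ε^2 := by
        filter_upwards [self_mem_nhdsWithin] with ε (hε : ε ∈ Set.Ioi 0)
        have hε0 : (0:ℝ) < ε := hε
        field_simp
      have hlimval : c * (s^2)⁻¹ = c * s ^ (-2:ℝ) := by rw [hrp s]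
      rw [← hlimval]
      exact Tendsto.congr' heq h1
  -- final value
  have hval : ∫ s, c * s ^ (-2:ℝ) ∂ρ = (∫ ω, (S ω) ^ (-2:ℝ) ∂μ) / Real.Gamma (1 - β) := by
    rw [integral_const_mul, hρ,
      integral_map hSm.aemeasurable hm2.aestronglyMeasurable]
    rw [hc, div_eq_mul_inv, mul_comm]
  rw [← hval]
  apply key.congr'
  filter_upwards [self_mem_nhdsWithin] with ε (hε : ε ∈ Set.Ioi 0)
  rw [integral_div, hPε ε hε]
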